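/- For a distributed matrix multiplication problem over a finite field F with parameters p, m, n and N workers, any (possibly non-linear) computation strategy — encoders f_i : F^{s x r} -> F^{(s/p) x (r/m)}, g_i : F^{s x t} -> F^{(s/p) x (t/n)}, workers returning C_i = f_i(A)^T g_i(B), and decoders recovering A^T B from any K workers' results — satisfies K >= max(pm, pn). -/

import Mathlib

open Matrix Finset

private lemma card_mat (F : Type*) [Fintype F] (a b : ℕ) :
    Fintype.card (Matrix (Fin a) (Fin b) F) = Fintype.card F ^ (a * b) := by
  rw [Fintype.card_congr (Matrix.of (m := Fin a) (n := Fin b) (α := F)).symm]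
  simp [Fintype.card_fun, ← pow_mul, Nat.mul_comm]

/-- Information-theoretic converse (Lemma 2): over a finite field, any (possibly
non-linear) computation strategy with recovery threshold `K ≤ N` satisfies
`K ≥ max(pm, pn)`. -/
theorem stmt_11 (F : Type*) [Field F] [Fintype F] (N K p m n sp rm tn : ℕ)
    (hp : 0 < p) (hm : 0 < m) (hn : 0 < n)
    (hsp : 0 < sp) (hrm : 0 < rm) (htn : 0 < tn) (hKN : K ≤ N)
    (f : Fin N → Matrix (Fin (p * sp)) (Fin (m * rm)) F → Matrix (Fin sp) (Fin rm) F)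
    (g : Fin N → Matrix (Fin (p * sp)) (Fin (n * tn)) F → Matrix (Fin sp) (Fin tn) F)
    (d : (S : Finset (Fin N)) →
      (({i : Fin N // i ∈ S} → Matrix (Fin rm) (Fin tn) F) →
        Matrix (Fin (m * rm)) (Fin (n * tn)) F))
    (hd : ∀ S : Finset (Fin N), S.card = K →
      ∀ (A : Matrix (Fin (p * sp)) (Fin (m * rm)) F)
        (B : Matrix (Fin (p * sp)) (Fin (n * tn)) F),
        d S (fun i => (f i.1 A)ᵀ * g i.1 B) = Aᵀ * B) :
    p * m ≤ K ∧ p * n ≤ K := by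
  obtain ⟨S, -, hS⟩ := Finset.exists_subset_card_eq (s := (Finset.univ : Finset (Fin N))) (n := K)
    (by simpa using hKN)
  have hF : 1 < Fintype.card F := Fintype.one_lt_card
  have hAne : (0 : ℕ) < m * rm := Nat.mul_pos hm hrm
  have hBne : (0 : ℕ) < n * tn := Nat.mul_pos hn htn
  constructor
  · -- p * m ≤ K : the map A ↦ (f i A)_{i ∈ S} is injective
    have hinj : Function.Injective
        (fun (A : Matrix (Fin (p * sp)) (Fin (m * rm)) F) =>
          fun i : {i : Fin N // i ∈ S} => f i.1 A) := by
      intro A A' h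
      have hmul : ∀ B : Matrix (Fin (p * sp)) (Fin (n * tn)) F, Aᵀ * B = A'ᵀ * B := by
        intro B
        have harg : (fun i : {i : Fin N // i ∈ S} => (f i.1 A)ᵀ * g i.1 B)
            = (fun i => (f i.1 A')ᵀ * g i.1 B) := by
          funext i
          have hi := congrFun h i
          dsimp only at hi
          rw [hi]
        rw [← hd S hS A B, ← hd S hS A' B, harg]
      have hT : Aᵀ = A'ᵀ := by
        ext i j
        have := congrFun (congrFun
          (hmul (Matrix.single j ⟨0, hBne⟩ 1)) i) ⟨0, hBne⟩
        simpa [Matrix.mul_apply, Matrix.single, mul_ite,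
          Finset.sum_ite_eq] using this
      exact Matrix.transpose_inj.mp hT
    have hcard := Fintype.card_le_of_injective _ hinj
    rw [Fintype.card_fun, Fintype.card_coe, hS, card_mat, card_mat] at hcard
    have hcard' : Fintype.card F ^ (p * sp * (m * rm)) ≤
        Fintype.card F ^ (sp * rm * K) := by
      calc Fintype.card F ^ (p * sp * (m * rm))
          ≤ (Fintype.card F ^ (sp * rm)) ^ K := hcard
        _ = Fintype.card F ^ (sp * rm * K) := by rw [← pow_mul]
    have hexp := (Nat.pow_le_pow_iff_right hF).mp hcard'
    have hle : p * m * (sp * rm) ≤ K * (sp * rm) := by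
      calc p * m * (sp * rm) = p * sp * (m * rm) := by ring
        _ ≤ sp * rm * K := hexp
        _ = K * (sp * rm) := by ring
    exact Nat.le_of_mul_le_mul_right hle (Nat.mul_pos hsp hrm)
  · -- p * n ≤ K : the map B ↦ (g i B)_{i ∈ S} is injective
    have hinj : Function.Injective
        (fun (B : Matrix (Fin (p * sp)) (Fin (n * tn)) F) =>
          fun i : {i : Fin N // i ∈ S} => g i.1 B) := by
      intro B B' h
      have hmul : ∀ A : Matrix (Fin (p * sp)) (Fin (m * rm)) F, Aᵀ * B = Aᵀ * B' := by
        intro A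
        have harg : (fun i : {i : Fin N // i ∈ S} => (f i.1 A)ᵀ * g i.1 B)
            = (fun i => (f i.1 A)ᵀ * g i.1 B') := by
          funext i
          have hi := congrFun h i
          dsimp only at hi
          rw [hi]
        rw [← hd S hS A B, ← hd S hS A B', harg]
      ext j c
      have := congrFun (congrFun
        (hmul (Matrix.single j ⟨0, hAne⟩ 1)) ⟨0, hAne⟩) c
      simpa [Matrix.mul_apply, Matrix.single, mul_ite,
        Finset.sum_ite_eq] using this
    have hcard := Fintype.card_le_of_injective _ hinj
    rw [Fintype.card_fun, Fintype.card_coe, hS, card_mat, card_mat] at hcard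
    have hcard' : Fintype.card F ^ (p * sp * (n * tn)) ≤
        Fintype.card F ^ (sp * tn * K) := by
      calc Fintype.card F ^ (p * sp * (n * tn))
          ≤ (Fintype.card F ^ (sp * tn)) ^ K := hcard
        _ = Fintype.card F ^ (sp * tn * K) := by rw [← pow_mul]
    have hexp := (Nat.pow_le_pow_iff_right hF).mp hcard'
    have hle : p * n * (sp * tn) ≤ K * (sp * tn) := by
      calc p * n * (sp * tn) = p * sp * (n * tn) := by ring
        _ ≤ sp * tn * K := hexp
        _ = K * (sp * tn) := by ring
    exact Nat.le_of_mul_le_mul_right hle (Nat.mul_pos hsp htn)
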